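/- For a ∈ (0,1), let γ(a) = 0.1a + 0.9, p'(a) = (a/4)/(1 - a/2), and K₁(a,c,p) = (1+c-ac)^p·(√(1+c²-ac))^{1-p}. Then K₁(a, a·γ(a), p'(a)) > 1 for all a ∈ (0,1). -/

import Mathlib

lemma K1_aux (x y B S : ℝ) (hB : B ≠ 0) (hS : S ≠ 0) (hy : y ≠ 0) :
    1 - ((x / y) * B⁻¹ + (1 - x / y) * ((1 + S) / (2 * S)))
      = (y * (2 * S * B) - x * (2 * S) - (y - x) * (1 + S) * B) / (y * (2 * S * B)) := by
  field_simp
  ring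

set_option maxHeartbeats 800000 in
/-- K₁(a, a·γ(a), p'(a)) > 1 for all a ∈ (0,1), where γ(a) = 0.1a + 0.9,
p'(a) = (a/4)/(1-a/2), and K₁(a,c,p) = (1+c-ac)^p·(√(1+c²-ac))^{1-p}. -/
theorem K1_gt_one (a : ℝ) (ha0 : 0 < a) (ha1 : a < 1)
    (γ p' c : ℝ) (hγ : γ = 0.1 * a + 0.9) (hp' : p' = (a / 4) / (1 - a / 2))
    (hc : c = a * γ) :
    (1 + c - a * c) ^ p' * (Real.sqrt (1 + c ^ 2 - a * c)) ^ (1 - p') > 1 := by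
  have hc' : c = a * (0.1 * a + 0.9) := by rw [hc, hγ]
  set b1 : ℝ := 1 + c - a * c with hb1def
  set s : ℝ := 1 + c ^ 2 - a * c with hsdef
  have hcpos : 0 < c := by rw [hc']; nlinarith
  have hca : c < a := by rw [hc']; nlinarith
  have hb1 : 1 < b1 := by rw [hb1def]; nlinarith
  have hb1pos : 0 < b1 := by linarith
  have hs : 0 < s := by rw [hsdef, hc']; nlinarith
  have hp0 : 0 ≤ p' := by
    rw [hp']; apply div_nonneg <;> linarith
  have hp1 : p' < 1 := by
    rw [hp']
    rw [div_lt_one (by linarith)]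
    linarith
  set b2 : ℝ := Real.sqrt s with hb2def
  have hb2pos : 0 < b2 := Real.sqrt_pos.mpr hs
  -- bound on 1/b2
  have hb2' : 2 * s / (1 + s) ≤ b2 := by
    rw [div_le_iff₀ (by linarith)]
    nlinarith [Real.sq_sqrt hs.le, Real.sqrt_nonneg s,
      mul_nonneg (Real.sqrt_nonneg s) (sq_nonneg (Real.sqrt s - 1))]
  have hb2inv : b2⁻¹ ≤ (1 + s) / (2 * s) := by
    have h := inv_anti₀ (by positivity) hb2'
    rwa [inv_div] at h
  -- the key rational inequality
  have key : p' * b1⁻¹ + (1 - p') * ((1 + s) / (2 * s)) < 1 := by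
    have h4 : (0:ℝ) < 1 - a / 2 := by linarith
    have hR : (0:ℝ) < 36/25 + 53/500*a + 363/1000*a^2 + 1/200*a^3 - 13/1000*a^4 - 1/1000*a^5 := by
      nlinarith [pow_nonneg ha0.le 2, pow_nonneg ha0.le 3,
        pow_le_one₀ ha0.le ha1.le (n := 4), pow_le_one₀ ha0.le ha1.le (n := 5),
        mul_pos ha0 ha0]
    have hnum : (0:ℝ) < (1 - a/2) * (2*s*b1) - (a/4) * (2*s) - ((1 - a/2) - a/4)*(1+s)*b1 := by
      rw [hb1def, hsdef, hc']
      nlinarith [mul_pos (mul_pos (mul_pos ha0 ha0) (sub_pos.mpr ha1)) hR]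
    have expand : 1 - (p' * b1⁻¹ + (1 - p') * ((1 + s) / (2 * s)))
        = ((1 - a/2) * (2*s*b1) - (a/4) * (2*s) - ((1 - a/2) - a/4)*(1+s)*b1)
          / ((1 - a/2) * (2*s*b1)) := by
      rw [hp']
      exact K1_aux (a/4) (1 - a/2) b1 s (ne_of_gt hb1pos) (ne_of_gt hs) (ne_of_gt h4)
    have hden : (0:ℝ) < (1 - a/2) * (2*s*b1) := by positivity
    have := div_pos hnum hden
    rw [← expand] at this
    linarith
  have hS : p' * b1⁻¹ + (1 - p') * b2⁻¹ < 1 := by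
    have := mul_le_mul_of_nonneg_left hb2inv (by linarith : (0:ℝ) ≤ 1 - p')
    linarith
  have hgm : (b1⁻¹) ^ p' * (b2⁻¹) ^ (1 - p') ≤ p' * b1⁻¹ + (1 - p') * b2⁻¹ :=
    Real.geom_mean_le_arith_mean2_weighted hp0 (by linarith) (by positivity) (by positivity)
      (by ring)
  have hrw : (b1⁻¹) ^ p' * (b2⁻¹) ^ (1 - p') = (b1 ^ p' * b2 ^ (1 - p'))⁻¹ := by
    rw [Real.inv_rpow hb1pos.le, Real.inv_rpow hb2pos.le, mul_inv]
  have hinv : (b1 ^ p' * b2 ^ (1 - p'))⁻¹ < 1 := by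
    rw [← hrw]; exact lt_of_le_of_lt hgm hS
  have hpos : 0 < b1 ^ p' * b2 ^ (1 - p') := by
    exact mul_pos (Real.rpow_pos_of_pos hb1pos _) (Real.rpow_pos_of_pos hb2pos _)
  have hinvpos : 0 < (b1 ^ p' * b2 ^ (1 - p'))⁻¹ := by positivity
  have := (one_lt_inv₀ hinvpos).mpr hinv
  rwa [inv_inv] at this
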